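/- Fix a constant δ ∈ (0,1) and let F_δ be the family of all tampering functions f : {0,1}^n → {0,1}^n such that every output bit of f depends on at most ⌊δn⌋ of the input bits. For every constant γ > 0 there exist a constant ε_0 > 0 and n_0 such that for all n ≥ n_0: any coding scheme with block length n that is non-malleable with respect to F_δ with error ε ≤ ε_0 has rate at most 1 − δ + γ. -/

import Mathlib

open Finset

/-- Bit strings of length `n`, i.e. `{0,1}^n`. -/
abbrev Word (n : ℕ) := Fin n → Bool

/-- Messages of length `k`, i.e. `{0,1}^k`. -/
abbrev Msg (k : ℕ) := Fin k → Bool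

/-- Values in `{0,1}^k ∪ {⊥, same}`: `none` = `same`, `some none` = `⊥`,
`some (some s)` = the message `s`. -/
abbrev NMVal (k : ℕ) := Option (Option (Msg k))

/-- `copy x s = s` if `x = same`, and `copy x s = x` otherwise. -/
def copyFn {k : ℕ} (x : NMVal k) (s : Msg k) : Option (Msg k) := x.getD (some s)

/-- Statistical (total variation) distance between two mass functions on a finite set. -/
noncomputable def statDist {α : Type*} [Fintype α] (P Q : α → ℝ) : ℝ :=
  (∑ x, |P x - Q x|) / 2

/-- A probability mass function on a finite set. -/
def IsDist {α : Type*} [Fintype α] (D : α → ℝ) : Prop :=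
  (∀ a, 0 ≤ D a) ∧ ∑ a, D a = 1

/-- A coding scheme with block length `n` and message length `k`: a randomized
encoder `enc` (given as the probability mass function of `Enc(s)`) and a
deterministic decoder `dec` (`none` = `⊥`) such that `Dec(Enc(s)) = s` always. -/
structure CodingScheme (n k : ℕ) where
  enc : Msg k → Word n → ℝ
  dec : Word n → Option (Msg k)
  enc_nonneg : ∀ s x, 0 ≤ enc s x
  enc_sum : ∀ s, ∑ x, enc s x = 1
  dec_enc : ∀ s x, 0 < enc s x → dec x = some s

/-- The distribution of `Dec(f(Enc(s)))`. -/
noncomputable def decDist {n k : ℕ} (C : CodingScheme n k)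
    (f : Word n → Word n) (s : Msg k) : Option (Msg k) → ℝ :=
  fun y => ∑ x, if C.dec (f x) = y then C.enc s x else 0

/-- The distribution of `copy(S', s)` for `S' ~ D`. -/
noncomputable def copyDist {k : ℕ} (D : NMVal k → ℝ) (s : Msg k) : Option (Msg k) → ℝ :=
  fun y => ∑ v, if copyFn v s = y then D v else 0

/-- The distribution `D_{f,s}` of the random variable that equals `same` if
`f(Enc(s)) = Enc(s)` and `Dec(f(Enc(s)))` otherwise. -/
noncomputable def tamperDist {n k : ℕ} (C : CodingScheme n k)
    (f : Word n → Word n) (s : Msg k) : NMVal k → ℝ :=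
  fun v => ∑ x, if (if f x = x then (none : NMVal k) else some (C.dec (f x))) = v
    then C.enc s x else 0

/-- Non-malleability of a coding scheme w.r.t. a family `F` with error `ε`. -/
def NonMalleable {n k : ℕ} (C : CodingScheme n k)
    (F : Set (Word n → Word n)) (ε : ℝ) : Prop :=
  ∀ f ∈ F, ∃ D : NMVal k → ℝ, IsDist D ∧
    ∀ s : Msg k, statDist (decDist C f s) (copyDist D s) ≤ ε

/-- Strong non-malleability of a coding scheme w.r.t. a family `F` with error `ε`. -/
def StronglyNonMalleable {n k : ℕ} (C : CodingScheme n k)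
    (F : Set (Word n → Word n)) (ε : ℝ) : Prop :=
  ∀ f ∈ F, ∀ s₁ s₂ : Msg k, s₁ ≠ s₂ →
    statDist (tamperDist C f s₁) (tamperDist C f s₂) ≤ ε

/-- Hamming weight of a word. -/
def hammingWt {n : ℕ} (x : Word n) : ℕ := (univ.filter (fun i => x i = true)).card

/-- The coding scheme has relative distance `δ`: any offset of a codeword by a
nonzero `Δ` of Hamming weight at most `δn` is rejected by the decoder. -/
def HasRelDist {n k : ℕ} (C : CodingScheme n k) (δ : ℝ) : Prop :=
  ∀ s x, 0 < C.enc s x → ∀ Δ : Word n, Δ ≠ (fun _ => false) →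
    (hammingWt Δ : ℝ) ≤ δ * n → C.dec (fun i => xor (x i) (Δ i)) = none

/-- The binary entropy function (logs base 2). -/
noncomputable def binEnt (δ : ℝ) : ℝ :=
  -(δ * Real.logb 2 δ) - (1 - δ) * Real.logb 2 (1 - δ)

/-- The family `F_δ` of tampering functions on `{0,1}^n` in which every output bit
depends on at most `⌊δn⌋` input bits. -/
def LocalFam (n : ℕ) (δ : ℝ) : Set (Word n → Word n) :=
  {f | ∀ i : Fin n, ∃ B : Finset (Fin n), B.card ≤ ⌊δ * (n : ℝ)⌋₊ ∧
    ∀ x y : Word n, (∀ j ∈ B, x j = y j) → f x i = f y i}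

section NMCAux
open Classical

theorem nmc_sum_biUnion_le {α β : Type*} [DecidableEq β] (s : Finset α) (t : α → Finset β)
    (f : β → ℝ) (hf : ∀ x, 0 ≤ f x) :
    ∑ x ∈ s.biUnion t, f x ≤ ∑ i ∈ s, ∑ x ∈ t i, f x := by
  classical
  induction s using Finset.induction_on with
  | empty => simp
  | insert a s' hx ih =>
    rw [Finset.biUnion_insert, Finset.sum_insert hx]
    have h1 : ∑ x ∈ t a ∪ s'.biUnion t, f x + ∑ x ∈ t a ∩ s'.biUnion t, f x
        = ∑ x ∈ t a, f x + ∑ x ∈ s'.biUnion t, f x := Finset.sum_union_inter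
    have h2 : 0 ≤ ∑ x ∈ t a ∩ s'.biUnion t, f x := Finset.sum_nonneg fun i _ => hf i
    linarith [ih]

theorem abs_le_two_statDist {α : Type*} [Fintype α] (P Q : α → ℝ) (o : α) :
    |P o - Q o| ≤ 2 * statDist P Q := by
  have h : |P o - Q o| ≤ ∑ x, |P x - Q x| :=
    Finset.single_le_sum (f := fun x => |P x - Q x|) (fun i _ => abs_nonneg _) (mem_univ o)
  unfold statDist; linarith

variable {n k : ℕ}

def preW (m : ℕ) (x : Word n) : Word n := fun i => if i.val < m then x i else false
def sufW (m : ℕ) (x : Word n) : Word n := fun i => if i.val < m then false else x i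
def fT (m : ℕ) (V : Finset (Word n)) (x : Word n) : Word n :=
  fun i => if i.val < m then (if preW m x ∈ V then x i else false) else x i

lemma preW_preW (m : ℕ) (x : Word n) : preW m (preW m x) = preW m x := by
  funext i; simp only [preW]; split <;> simp_all
lemma sufW_sufW (m : ℕ) (x : Word n) : sufW m (sufW m x) = sufW m x := by
  funext i; simp only [sufW]; split <;> simp_all
lemma fT_eq_self {m : ℕ} {V : Finset (Word n)} {x : Word n} (h : preW m x ∈ V) :
    fT m V x = x := by
  funext i; simp only [fT, h, if_true]; split <;> rfl
lemma fT_eq_suf {m : ℕ} {V : Finset (Word n)} {x : Word n} (h : preW m x ∉ V) :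
    fT m V x = sufW m x := by
  funext i; simp only [fT, sufW, h, if_false]

/-- the tampering function is in the local family -/
lemma fT_mem_localFam {δ : ℝ} (hδ : 1 ≤ ⌊δ * (n : ℝ)⌋₊) (V : Finset (Word n)) :
    fT ⌊δ * (n : ℝ)⌋₊ V ∈ LocalFam n δ := by
  intro i
  set m := ⌊δ * (n : ℝ)⌋₊ with hm
  by_cases hi : i.val < m
  · refine ⟨Finset.univ.filter (fun j : Fin n => j.val < m), ?_, ?_⟩
    · have : (Finset.univ.filter (fun j : Fin n => j.val < m)).card ≤ (Finset.range m).card := by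
        apply Finset.card_le_card_of_injOn (fun j => j.val)
        · intro a ha; simp only [Finset.coe_filter, Set.mem_setOf_eq] at ha; simpa using ha.2
        · intro a _ b _ hab; exact Fin.ext hab
      simpa using this
    · intro x y hagree
      have hpre : preW m x = preW m y := by
        funext j
        by_cases hj : j.val < m
        · have := hagree j (by simp [hj])
          simp [preW, hj, this]
        · simp [preW, hj]
      have hxy : x i = y i := hagree i (by simp [hi])
      simp only [fT, hi, if_true, hpre, hxy]
  · refine ⟨{i}, by simpa using hδ, ?_⟩
    intro x y hagree
    have hxy : x i = y i := hagree i (by simp)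
    simp only [fT, hi, if_false, hxy]

def restrHigh (m : ℕ) (x : Word n) : Word (n - m) :=
  fun j => if h : m + j.val < n then x ⟨m + j.val, h⟩ else false
def restrLow (m : ℕ) (x : Word n) : Word (Nat.min m n) :=
  fun j => x ⟨j.val, lt_of_lt_of_le j.isLt (Nat.min_le_right m n)⟩

lemma card_fiber_pre (m : ℕ) (y : Word n) :
    ((Finset.univ : Finset (Word n)).filter fun x => preW m x = y).card ≤ 2 ^ (n - m) := by
  have : ((Finset.univ : Finset (Word n)).filter fun x => preW m x = y).card
      ≤ (Finset.univ : Finset (Word (n - m))).card := by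
    apply Finset.card_le_card_of_injOn (restrHigh m) (fun a _ => Finset.mem_univ _)
    intro x hx x' hx' hee
    simp only [Finset.coe_filter, Set.mem_setOf_eq, Finset.mem_univ, true_and] at hx hx'
    funext i
    by_cases hi : i.val < m
    · have h1 := congrFun hx i
      have h2 := congrFun hx' i
      simp only [preW, hi, if_true] at h1 h2
      rw [h1, h2]
    · have hj : i.val - m < n - m := by have := i.isLt; omega
      have := congrFun hee ⟨i.val - m, hj⟩
      simp only [restrHigh] at this
      have hlt : m + (i.val - m) < n := by have := i.isLt; omega
      rw [dif_pos hlt, dif_pos hlt] at this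
      have hfin : (⟨m + (i.val - m), hlt⟩ : Fin n) = i := by
        apply Fin.ext; simp; omega
      rwa [hfin] at this
  simpa using this

lemma card_suf_patterns (m : ℕ) :
    ((Finset.univ : Finset (Word n)).filter fun z => sufW m z = z).card ≤ 2 ^ (n - m) := by
  have : ((Finset.univ : Finset (Word n)).filter fun z => sufW m z = z).card
      ≤ (Finset.univ : Finset (Word (n - m))).card := by
    apply Finset.card_le_card_of_injOn (restrHigh m) (fun a _ => Finset.mem_univ _)
    intro x hx x' hx' hee
    simp only [Finset.coe_filter, Set.mem_setOf_eq, Finset.mem_univ, true_and] at hx hx'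
    funext i
    by_cases hi : i.val < m
    · have h1 := congrFun hx i
      have h2 := congrFun hx' i
      simp only [sufW, hi, if_true] at h1 h2
      rw [← h1, ← h2]
    · have hj : i.val - m < n - m := by have := i.isLt; omega
      have := congrFun hee ⟨i.val - m, hj⟩
      simp only [restrHigh] at this
      have hlt : m + (i.val - m) < n := by have := i.isLt; omega
      rw [dif_pos hlt, dif_pos hlt] at this
      have hfin : (⟨m + (i.val - m), hlt⟩ : Fin n) = i := by
        apply Fin.ext; simp; omega
      rwa [hfin] at this
  simpa using this

lemma card_pre_patterns (m : ℕ) :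
    ((Finset.univ : Finset (Word n)).filter fun y => preW m y = y).card ≤ 2 ^ m := by
  have : ((Finset.univ : Finset (Word n)).filter fun y => preW m y = y).card
      ≤ (Finset.univ : Finset (Word (Nat.min m n))).card := by
    apply Finset.card_le_card_of_injOn (restrLow m) (fun a _ => Finset.mem_univ _)
    intro x hx x' hx' hee
    simp only [Finset.coe_filter, Set.mem_setOf_eq, Finset.mem_univ, true_and] at hx hx'
    funext i
    by_cases hi : i.val < m
    · have hj : i.val < Nat.min m n := Nat.lt_min.mpr ⟨hi, i.isLt⟩
      have := congrFun hee ⟨i.val, hj⟩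
      simpa only [restrLow] using this
    · have h1 := congrFun hx i
      have h2 := congrFun hx' i
      simp only [preW, hi, if_false] at h1 h2
      rw [← h1, ← h2]
  have h2 : (Finset.univ : Finset (Word (Nat.min m n))).card = 2 ^ (Nat.min m n) := by simp
  calc _ ≤ _ := this
    _ = 2 ^ (Nat.min m n) := h2
    _ ≤ 2 ^ m := Nat.pow_le_pow_right (by norm_num) (Nat.min_le_left _ _)

end NMCAux

section NMCAux2
open Classical Finset

variable {n k : ℕ}

noncomputable def muP (C : CodingScheme n k) (m : ℕ) (s : Msg k) (y : Word n) : ℝ :=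
  ∑ x, if preW m x = y then C.enc s x else 0
noncomputable def gVal (C : CodingScheme n k) (m : ℕ) (V : Finset (Word n)) (s : Msg k) : ℝ :=
  ∑ x, if preW m x ∈ V then C.enc s x else 0
noncomputable def crD (C : CodingScheme n k) (m : ℕ) (s t : Msg k) : ℝ :=
  ∑ x, if C.dec (sufW m x) = some t then C.enc s x else 0
noncomputable def suppPre (C : CodingScheme n k) (m : ℕ) (s : Msg k) : Finset (Word n) :=
  Finset.univ.filter fun y => preW m y = y ∧ 0 < muP C m s y

variable (C : CodingScheme n k) (m : ℕ)

lemma muP_nonneg (s : Msg k) (y : Word n) : 0 ≤ muP C m s y :=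
  Finset.sum_nonneg fun x _ => by split <;> [exact C.enc_nonneg s x; exact le_refl 0]

lemma gVal_nonneg (V : Finset (Word n)) (s : Msg k) : 0 ≤ gVal C m V s :=
  Finset.sum_nonneg fun x _ => by split <;> [exact C.enc_nonneg s x; exact le_refl 0]

lemma crD_nonneg (s t : Msg k) : 0 ≤ crD C m s t :=
  Finset.sum_nonneg fun x _ => by split <;> [exact C.enc_nonneg s x; exact le_refl 0]

lemma enc_le_one (s : Msg k) (x : Word n) : C.enc s x ≤ 1 := by
  have := Finset.single_le_sum (f := fun x => C.enc s x)
    (fun i _ => C.enc_nonneg s i) (Finset.mem_univ x)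
  rw [C.enc_sum s] at this; exact this

/-- the supports of distinct messages are disjoint, so the total mass at any word is ≤ 1 -/
lemma sum_enc_le_one (x : Word n) : ∑ s : Msg k, C.enc s x ≤ 1 := by
  by_cases h : ∃ s₀, 0 < C.enc s₀ x
  · obtain ⟨s₀, hs₀⟩ := h
    have heq : ∑ s : Msg k, C.enc s x = C.enc s₀ x := by
      apply Finset.sum_eq_single s₀
      · intro s _ hne
        by_contra hs
        have hpos : 0 < C.enc s x := lt_of_le_of_ne (C.enc_nonneg s x) (Ne.symm hs)
        have := (C.dec_enc s x hpos).symm.trans (C.dec_enc s₀ x hs₀)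
        exact hne (by injection this)
      · intro hs; exact absurd (Finset.mem_univ s₀) hs
    rw [heq]; exact enc_le_one C s₀ x
  · push_neg at h
    have : ∀ s ∈ Finset.univ, C.enc s (x : Word n) = 0 := fun s _ =>
      le_antisymm (h s) (C.enc_nonneg s x)
    rw [Finset.sum_eq_zero this]; norm_num

/-- total mass over prefix patterns is 1 -/
lemma muP_total (s : Msg k) :
    ∑ y ∈ Finset.univ.filter (fun y : Word n => preW m y = y), muP C m s y = 1 := by
  have := Finset.sum_fiberwise_of_maps_to (s := (Finset.univ : Finset (Word n)))
    (t := Finset.univ.filter (fun y : Word n => preW m y = y)) (g := preW m)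
    (fun x _ => by simp [preW_preW]) (C.enc s)
  rw [← C.enc_sum s, ← this]
  apply Finset.sum_congr rfl
  intro y _
  rw [muP, Finset.sum_filter]

/-- gVal as a sum of muP over patterns in V -/
lemma gVal_eq_sum {V : Finset (Word n)}
    (hV : V ⊆ Finset.univ.filter (fun y : Word n => preW m y = y)) (s : Msg k) :
    gVal C m V s = ∑ y ∈ V, muP C m s y := by
  have h := Finset.sum_fiberwise_of_maps_to (s := (Finset.univ : Finset (Word n)))
    (t := Finset.univ.filter (fun y : Word n => preW m y = y)) (g := preW m)
    (fun x _ => by simp [preW_preW]) (fun x => if preW m x ∈ V then C.enc s x else 0)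
  have h2 : ∀ y ∈ Finset.univ.filter (fun y : Word n => preW m y = y),
      (∑ x ∈ Finset.univ.filter (fun x => preW m x = y),
        if preW m x ∈ V then C.enc s x else 0)
      = if y ∈ V then muP C m s y else 0 := by
    intro y _
    by_cases hy : y ∈ V
    · rw [if_pos hy, muP, Finset.sum_filter]
      apply Finset.sum_congr rfl
      intro x hx
      by_cases hxy : preW m x = y
      · simp [hxy, hy]
      · simp [hxy]
    · rw [if_neg hy]
      apply Finset.sum_eq_zero
      intro x hx
      simp only [Finset.mem_filter, Finset.mem_univ, true_and] at hx
      simp [hx, hy]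
  rw [gVal, ← h, Finset.sum_congr rfl h2, ← Finset.sum_filter]
  congr 1
  ext y
  simp only [Finset.mem_filter, Finset.mem_univ, true_and]
  constructor
  · rintro ⟨_, hy⟩; exact hy
  · intro hy
    have := hV hy
    simp only [Finset.mem_filter, Finset.mem_univ, true_and] at this
    exact ⟨this, hy⟩

/-- gVal on own prefix support is 1 -/
lemma gVal_suppPre (s : Msg k) : gVal C m (suppPre C m s) s = 1 := by
  rw [← C.enc_sum s, gVal]
  apply Finset.sum_congr rfl
  intro x _
  by_cases hx : 0 < C.enc s x
  · have hmem : preW m x ∈ suppPre C m s := by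
      simp only [suppPre, Finset.mem_filter, Finset.mem_univ, true_and]
      refine ⟨preW_preW m x, ?_⟩
      have := Finset.single_le_sum
        (f := fun x' => if preW m x' = preW m x then C.enc s x' else 0)
        (fun i _ => by split <;> [exact C.enc_nonneg s i; exact le_refl 0]) (Finset.mem_univ x)
      simp only [if_pos rfl] at this
      exact lt_of_lt_of_le hx (by simpa [muP] using this)
    rw [if_pos hmem]
  · have : C.enc s x = 0 := le_antisymm (not_lt.mp hx) (C.enc_nonneg s x)
    simp [this]

end NMCAux2

section NMCAux3
open Classical Finset

variable {n k : ℕ} (C : CodingScheme n k) (m : ℕ)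

lemma copyDist_some (D : NMVal k → ℝ) (s u : Msg k) :
    copyDist D s (some u) = (if u = s then D none else 0) + D (some (some u)) := by
  rw [copyDist, Fintype.sum_option]
  congr 1
  · simp only [copyFn, Option.getD]
    by_cases h : u = s
    · simp [h]
    · simp [h, Ne.symm h]
  · rw [Fintype.sum_option]
    have h1 : (if copyFn (some none) s = some u then D (some none) else 0) = 0 := by
      simp [copyFn]
    rw [h1, zero_add]
    have : ∀ w : Msg k, (if copyFn (some (some w)) s = some u then D (some (some w)) else 0)
        = if w = u then D (some (some w)) else 0 := by
      intro w; simp [copyFn]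
    rw [Finset.sum_congr rfl (fun w _ => this w)]
    simp [Finset.sum_ite_eq']

lemma sum_ite_dec (w : Word n) (r : ℝ) (hr : 0 ≤ r) :
    ∑ t : Msg k, (if C.dec w = some t then r else 0) ≤ r := by
  rcases h : C.dec w with _ | t₀
  · simpa using hr
  · rw [Finset.sum_eq_single t₀]
    · simp
    · intro t _ hne; simp [h, Option.some_inj, Ne.symm hne, hne]
    · intro habs; exact absurd (Finset.mem_univ t₀) habs

/-- lower bound on probability of decoding to self -/
lemma decDist_self_ge (V : Finset (Word n)) (s : Msg k) :
    gVal C m V s ≤ decDist C (fT m V) s (some s) := by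
  apply Finset.sum_le_sum
  intro x _
  by_cases hV : preW m x ∈ V
  · rw [if_pos hV]
    by_cases he : 0 < C.enc s x
    · rw [fT_eq_self hV, if_pos (C.dec_enc s x he)]
    · have h0 : C.enc s x = 0 := le_antisymm (not_lt.mp he) (C.enc_nonneg s x)
      simp [h0]
  · rw [if_neg hV]
    split <;> [exact C.enc_nonneg s x; exact le_refl 0]

lemma decDist_self_le (V : Finset (Word n)) (s : Msg k) :
    decDist C (fT m V) s (some s) ≤ gVal C m V s + crD C m s s := by
  rw [gVal, crD, ← Finset.sum_add_distrib]
  apply Finset.sum_le_sum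
  intro x _
  by_cases hV : preW m x ∈ V
  · rw [if_pos hV]
    have h2 : (0:ℝ) ≤ if C.dec (sufW m x) = some s then C.enc s x else 0 := by
      split <;> [exact C.enc_nonneg s x; exact le_refl 0]
    have h1 : (if C.dec (fT m V x) = some s then C.enc s x else 0) ≤ C.enc s x := by
      split <;> [exact le_refl _; exact C.enc_nonneg s x]
    linarith
  · rw [if_neg hV, fT_eq_suf hV]
    have h2 : (0:ℝ) ≤ (0:ℝ) := le_refl 0
    have := gVal_nonneg C m V s
    nlinarith [C.enc_nonneg s x]

lemma decDist_cross_le (V : Finset (Word n)) (s u : Msg k) (hne : u ≠ s) :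
    decDist C (fT m V) s (some u) ≤ crD C m s u := by
  apply Finset.sum_le_sum
  intro x _
  by_cases hV : preW m x ∈ V
  · rw [fT_eq_self hV]
    by_cases he : 0 < C.enc s x
    · have hd : C.dec x = some s := C.dec_enc s x he
      have : ¬ (C.dec x = some u) := by rw [hd]; simpa using fun h => hne h.symm
      rw [if_neg this]
      split <;> [exact C.enc_nonneg s x; exact le_refl 0]
    · have h0 : C.enc s x = 0 := le_antisymm (not_lt.mp he) (C.enc_nonneg s x)
      simp [h0]
  · rw [fT_eq_suf hV]

/-- total cross-decoding mass of a fixed message is at most 1 -/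
lemma crD_total (s : Msg k) : ∑ t : Msg k, crD C m s t ≤ 1 := by
  simp only [crD]
  rw [Finset.sum_comm]
  calc ∑ x : Word n, ∑ t : Msg k, (if C.dec (sufW m x) = some t then C.enc s x else 0)
      ≤ ∑ x : Word n, C.enc s x :=
        Finset.sum_le_sum fun x _ => sum_ite_dec C (sufW m x) (C.enc s x) (C.enc_nonneg s x)
    _ = 1 := C.enc_sum s

/-- total self-decoding-after-suffix-copy mass over all messages -/
lemma crD_self_sum : ∑ s : Msg k, crD C m s s ≤ ((2:ℝ) ^ (n - m)) := by
  set Zset := (Finset.univ : Finset (Word n)).filter (fun z => sufW m z = z) with hZ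
  have hmaps : ∀ x ∈ (Finset.univ : Finset (Word n)), sufW m x ∈ Zset := by
    intro x _; simp [hZ, sufW_sufW]
  have hcr : ∀ s : Msg k, crD C m s s ≤ ∑ z ∈ Zset, (if C.dec z = some s then (1:ℝ) else 0) := by
    intro s
    have hfib := Finset.sum_fiberwise_of_maps_to (g := sufW m) hmaps
      (fun x => if C.dec (sufW m x) = some s then C.enc s x else 0)
    rw [crD, ← hfib]
    apply Finset.sum_le_sum
    intro z hz
    simp only [hZ, Finset.mem_filter, Finset.mem_univ, true_and] at hz
    have heq : ∀ x ∈ Finset.univ.filter (fun x => sufW m x = z),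
        (if C.dec (sufW m x) = some s then C.enc s x else 0)
        = (if C.dec z = some s then C.enc s x else 0) := by
      intro x hx
      simp only [Finset.mem_filter, Finset.mem_univ, true_and] at hx
      rw [hx]
    rw [Finset.sum_congr rfl heq]
    by_cases hd : C.dec z = some s
    · rw [if_pos hd]
      have : ∑ x ∈ Finset.univ.filter (fun x => sufW m x = z),
          (if C.dec z = some s then C.enc s x else 0)
          = ∑ x ∈ Finset.univ.filter (fun x => sufW m x = z), C.enc s x := by
        apply Finset.sum_congr rfl; intro x _; rw [if_pos hd]
      rw [this]
      calc ∑ x ∈ Finset.univ.filter (fun x => sufW m x = z), C.enc s x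
          ≤ ∑ x : Word n, C.enc s x := Finset.sum_le_sum_of_subset_of_nonneg
            (Finset.filter_subset _ _) (fun x _ _ => C.enc_nonneg s x)
        _ = 1 := C.enc_sum s
    · rw [if_neg hd]
      apply Finset.sum_nonpos
      intro x _
      rw [if_neg hd]
  calc ∑ s : Msg k, crD C m s s
      ≤ ∑ s : Msg k, ∑ z ∈ Zset, (if C.dec z = some s then (1:ℝ) else 0) :=
        Finset.sum_le_sum fun s _ => hcr s
    _ = ∑ z ∈ Zset, ∑ s : Msg k, (if C.dec z = some s then (1:ℝ) else 0) := Finset.sum_comm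
    _ ≤ ∑ z ∈ Zset, (1:ℝ) := Finset.sum_le_sum fun z _ => sum_ite_dec C z 1 zero_le_one
    _ = (Zset.card : ℝ) := by simp
    _ ≤ ((2:ℝ) ^ (n - m)) := by
        have := card_suf_patterns (n := n) m
        rw [← hZ] at this
        exact_mod_cast this

/-- at most `2^(n-m)` messages can put positive prefix mass on a fixed pattern -/
lemma card_heavy_le (y : Word n) (A : Finset (Msg k)) :
    (A.filter fun s => 0 < muP C m s y).card ≤ 2 ^ (n - m) := by
  classical
  set f : Msg k → Word n := fun s =>
    if h : ∃ x, preW m x = y ∧ 0 < C.enc s x then h.choose else (fun _ => false) with hf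
  have hex : ∀ s, 0 < muP C m s y → ∃ x, preW m x = y ∧ 0 < C.enc s x := by
    intro s hs
    by_contra hno
    push_neg at hno
    have : muP C m s y ≤ 0 := by
      apply Finset.sum_nonpos
      intro x _
      by_cases hxy : preW m x = y
      · rw [if_pos hxy]; exact hno x hxy
      · rw [if_neg hxy]
    linarith
  have h1 : (A.filter fun s => 0 < muP C m s y).card
      ≤ ((Finset.univ : Finset (Word n)).filter fun x => preW m x = y).card := by
    apply Finset.card_le_card_of_injOn f
    · intro s hs
      simp only [Finset.coe_filter, Set.mem_setOf_eq] at hs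
      have h := hex s hs.2
      simp only [hf, dif_pos h]
      simp [h.choose_spec.1]
    · intro s hs s' hs' heq
      simp only [Finset.coe_filter, Set.mem_setOf_eq] at hs hs'
      have h := hex s hs.2
      have h' := hex s' hs'.2
      simp only [hf, dif_pos h, dif_pos h'] at heq
      have e1 : C.dec h.choose = some s := C.dec_enc s _ h.choose_spec.2
      have e2 : C.dec h'.choose = some s' := C.dec_enc s' _ h'.choose_spec.2
      rw [heq, e2] at e1
      injection e1.symm
  exact le_trans h1 (card_fiber_pre m y)

end NMCAux3

set_option maxHeartbeats 1000000 in
/-- Fix `δ ∈ (0,1)`. For every constant `γ > 0` there exist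
`ε₀ > 0` and `n₀` such that for all `n ≥ n₀`: any coding scheme with block length
`n` that is non-malleable w.r.t. `F_δ` with error `ε ≤ ε₀` has rate at most
`1 − δ + γ`. -/
theorem local_tampering_capacity_upper_bound :
    ∀ δ : ℝ, 0 < δ → δ < 1 →
    ∀ γ : ℝ, 0 < γ →
    ∃ ε₀ : ℝ, 0 < ε₀ ∧ ∃ n₀ : ℕ, ∀ n : ℕ, n₀ ≤ n →
    ∀ k : ℕ, ∀ Cs : CodingScheme n k, ∀ ε : ℝ, 0 ≤ ε → ε ≤ ε₀ →
      NonMalleable Cs (LocalFam n δ) ε →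
      (k : ℝ) / (n : ℝ) ≤ 1 - δ + γ := by
  classical
  intro δ hδ0 hδ1 γ hγ
  set ℓ : ℕ := ⌈1/γ⌉₊ + 1 with hℓdef
  have hℓ1 : 1 ≤ ℓ := Nat.le_add_left 1 _
  have hℓR : (1:ℝ) ≤ (ℓ:ℝ) := by exact_mod_cast hℓ1
  have hℓpos : (0:ℝ) < (ℓ:ℝ) := by linarith
  have hℓγ : 1/γ ≤ ((ℓ - 1 : ℕ) : ℝ) := by
    have : ((⌈1/γ⌉₊ : ℕ) : ℝ) = ((ℓ - 1 : ℕ) : ℝ) := by rw [hℓdef]; norm_num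
    rw [← this]; exact Nat.le_ceil _
  refine ⟨1/(24*ℓ), by positivity, ?_⟩
  refine ⟨⌈((ℓ:ℝ) + 9)/γ⌉₊ + ⌈(1 + 2/γ)/(1-δ)⌉₊ + ⌈1/δ⌉₊ + 1, ?_⟩
  intro n hn k Cs ε hε0 hεub hNM
  by_contra hrate
  push_neg at hrate
  -- ==================== numeric groundwork ====================
  have hn_pos : 0 < n := by omega
  have hnR : (0:ℝ) < n := by exact_mod_cast hn_pos
  have hk : ((1:ℝ) - δ + γ) * n < k := (lt_div_iff₀ hnR).mp hrate
  set m : ℕ := ⌊δ * (n:ℝ)⌋₊ with hm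
  have hδn_nonneg : (0:ℝ) ≤ δ * n := by positivity
  have hm_le : (m:ℝ) ≤ δ * n := Nat.floor_le hδn_nonneg
  have hm_gt : δ * n < (m:ℝ) + 1 := Nat.lt_floor_add_one _
  have hceil1 : (⌈1/δ⌉₊ : ℕ) ≤ n := by omega
  have hceil2 : (⌈((ℓ:ℝ) + 9)/γ⌉₊ : ℕ) ≤ n := by omega
  have hceil3 : (⌈(1 + 2/γ)/(1-δ)⌉₊ : ℕ) ≤ n := by omega
  have hm1 : 1 ≤ m := by
    have h1 : (1:ℝ)/δ ≤ (n:ℝ) := le_trans (Nat.le_ceil _) (by exact_mod_cast hceil1)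
    have : (1:ℝ) ≤ δ * n := by
      rw [div_le_iff₀ hδ0] at h1; linarith [h1]
    exact Nat.le_floor (by exact_mod_cast this)
  have hmn : m < n := by
    have : (m:ℝ) < n := lt_of_le_of_lt hm_le (by nlinarith)
    exact_mod_cast this
  have hγn : (ℓ:ℝ) + 9 ≤ γ * n := by
    have h1 : ((ℓ:ℝ) + 9)/γ ≤ (n:ℝ) := le_trans (Nat.le_ceil _) (by exact_mod_cast hceil2)
    rw [div_le_iff₀ hγ] at h1; linarith
  have hkl : n - m ≤ k := by
    have h1 : ((n - m : ℕ) : ℝ) = (n:ℝ) - m := by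
      rw [Nat.cast_sub (le_of_lt hmn)]
    have h2 : ((n - m : ℕ) : ℝ) < (k:ℝ) + 1 := by
      rw [h1]; nlinarith
    have h3 : n - m < k + 1 := by exact_mod_cast h2
    omega
  set t : ℕ := k - (n - m) with hts
  have htk : k = (n - m) + t := by omega
  have htreal : γ * n - 1 < (t:ℝ) := by
    have h1 : ((t:ℕ) : ℝ) = (k:ℝ) - ((n:ℝ) - m) := by
      rw [hts, Nat.cast_sub hkl, Nat.cast_sub (le_of_lt hmn)]
    nlinarith
  have ht9 : ℓ + 8 ≤ t := by
    have h0 : ((ℓ:ℝ) + 8) < (t:ℝ) := by linarith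
    have h1 : ℓ + 8 < t := by exact_mod_cast h0
    omega
  have hpow32 : (32:ℝ) * ℓ ≤ 2 ^ (t - 1) := by
    have hnat : 32 * ℓ ≤ 2 ^ (t - 1) := by
      calc 32 * ℓ ≤ 32 * 2 ^ ℓ := Nat.mul_le_mul_left 32 (Nat.le_of_lt (Nat.lt_two_pow_self (n := ℓ)))
        _ = 2 ^ (ℓ + 5) := by rw [pow_add]; ring
        _ ≤ 2 ^ (t - 1) := Nat.pow_le_pow_right (by norm_num) (by omega)
    exact_mod_cast hnat
  have hγn2 : (0:ℝ) ≤ γ * n - 2 := by linarith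
  have ht2 : m + 1 ≤ (t - 1) * (ℓ - 1) := by
    have h1 : (1 + 2/γ)/(1-δ) ≤ (n:ℝ) := le_trans (Nat.le_ceil _) (by exact_mod_cast hceil3)
    have h2 : 1 + 2/γ ≤ (n:ℝ) * (1 - δ) := by
      rw [div_le_iff₀ (by linarith)] at h1; linarith
    have h3 : (m:ℝ) + 1 ≤ (n:ℝ) - 2/γ := by
      have hc : (n:ℝ)*(1-δ) = n - δ*n := by ring
      rw [hc] at h2
      linarith
    have h4 : (n:ℝ) - 2/γ = (γ * n - 2) * (1/γ) := by
      field_simp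
    have h5 : (γ * n - 2) * (1/γ) ≤ (γ * n - 2) * ((ℓ - 1 : ℕ):ℝ) :=
      mul_le_mul_of_nonneg_left hℓγ hγn2
    have h6 : (γ * n - 2) ≤ ((t - 1 : ℕ):ℝ) := by
      have : ((t - 1 : ℕ):ℝ) = (t:ℝ) - 1 := by
        rw [Nat.cast_sub (by omega : 1 ≤ t)]; norm_num
      linarith
    have h7 : (γ * n - 2) * ((ℓ - 1 : ℕ):ℝ) ≤ ((t-1:ℕ):ℝ) * ((ℓ - 1 : ℕ):ℝ) := by
      apply mul_le_mul_of_nonneg_right h6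
      positivity
    have : ((m:ℝ) + 1) ≤ ((t-1:ℕ):ℝ) * ((ℓ-1:ℕ):ℝ) := by linarith
    have hfin : ((m + 1 : ℕ):ℝ) ≤ (((t-1) * (ℓ-1) : ℕ):ℝ) := by push_cast; push_cast at this; linarith
    exact_mod_cast hfin
  -- ==================== combinatorial setup ====================
  set q : ℕ := n - m with hq
  have h2q1 : (1:ℝ) ≤ 2 ^ q := one_le_pow₀ (by norm_num)
  set β : ℝ := 1/(8*ℓ) with hβ
  have hβpos : 0 < β := by positivity
  set Tset : Finset (Word n) := Finset.univ.filter (fun y : Word n => preW m y = y) with hTset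
  set s'' : Msg k := (fun _ => false) with hs''
  set Bad1 : Finset (Msg k) := Finset.univ.filter (fun s => β < crD Cs m s s) with hBad1def
  set SmallT : Finset (Msg k) := Finset.univ.filter (fun u => β < crD Cs m s'' u) with hSmallTdef
  set GoodB : Finset (Msg k) := Finset.univ \ (Bad1 ∪ SmallT ∪ {s''}) with hGoodBdef
  have hcard_univ : ((Finset.univ : Finset (Msg k)).card : ℝ) = 2 ^ q * 2 ^ t := by
    have : (Finset.univ : Finset (Msg k)).card = 2 ^ k := by simp
    rw [this, htk, pow_add]
    push_cast; ring
  have hBad1card : (Bad1.card : ℝ) ≤ 8 * ℓ * 2 ^ q := by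
    have h1 : (Bad1.card : ℝ) * β ≤ ∑ s ∈ Bad1, crD Cs m s s := by
      have := Finset.card_nsmul_le_sum Bad1 (fun s => crD Cs m s s) β ?_
      · simpa [nsmul_eq_mul] using this
      · intro s hs
        simp only [hBad1def, Finset.mem_filter] at hs
        exact le_of_lt hs.2
    have h2 : ∑ s ∈ Bad1, crD Cs m s s ≤ ∑ s : Msg k, crD Cs m s s :=
      Finset.sum_le_sum_of_subset_of_nonneg (Finset.subset_univ _)
        (fun s _ _ => crD_nonneg Cs m s s)
    have h3 := crD_self_sum Cs m
    rw [← hq] at h3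
    have h4 : (Bad1.card : ℝ) * β ≤ 2 ^ q := by linarith
    rw [hβ] at h4
    have hl8 : (0:ℝ) < 8 * ℓ := by positivity
    calc (Bad1.card : ℝ) = (Bad1.card : ℝ) * (1/(8*ℓ)) * (8*ℓ) := by rw [mul_assoc, one_div_mul_cancel (ne_of_gt hl8), mul_one]
      _ ≤ 2 ^ q * (8 * ℓ) := by
          apply mul_le_mul_of_nonneg_right h4 (le_of_lt hl8)
      _ = 8 * ℓ * 2 ^ q := by ring
  have hSmallTcard : (SmallT.card : ℝ) ≤ 8 * ℓ := by
    have h1 : (SmallT.card : ℝ) * β ≤ ∑ u ∈ SmallT, crD Cs m s'' u := by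
      have := Finset.card_nsmul_le_sum SmallT (fun u => crD Cs m s'' u) β ?_
      · simpa [nsmul_eq_mul] using this
      · intro u hu
        simp only [hSmallTdef, Finset.mem_filter] at hu
        exact le_of_lt hu.2
    have h2 : ∑ u ∈ SmallT, crD Cs m s'' u ≤ ∑ u : Msg k, crD Cs m s'' u :=
      Finset.sum_le_sum_of_subset_of_nonneg (Finset.subset_univ _)
        (fun u _ _ => crD_nonneg Cs m s'' u)
    have h3 := crD_total Cs m s''
    have h4 : (SmallT.card : ℝ) * β ≤ 1 := by linarith
    rw [hβ] at h4
    have hl8 : (0:ℝ) < 8 * ℓ := by positivity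
    calc (SmallT.card : ℝ) = (SmallT.card : ℝ) * (1/(8*ℓ)) * (8*ℓ) := by rw [mul_assoc, one_div_mul_cancel (ne_of_gt hl8), mul_one]
      _ ≤ 1 * (8 * ℓ) := mul_le_mul_of_nonneg_right h4 (le_of_lt hl8)
      _ = 8 * ℓ := by ring
  -- pool bound
  have hPool : ∀ A : Finset (Msg k), A.card ≤ ℓ →
      (2:ℝ) ^ q * 2 ^ (t-1) ≤ ((GoodB \ A).card : ℝ) := by
    intro A hA
    have c1 : (GoodB.card : ℝ) ≤ ((GoodB \ A).card : ℝ) + A.card := by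
      exact_mod_cast Finset.card_le_card_sdiff_add_card
    have c2 : ((Finset.univ : Finset (Msg k)).card : ℝ)
        ≤ (GoodB.card : ℝ) + ((Bad1 ∪ SmallT ∪ {s''}).card : ℝ) := by
      have := Finset.card_le_card_sdiff_add_card (s := (Finset.univ : Finset (Msg k)))
        (t := Bad1 ∪ SmallT ∪ {s''})
      rw [hGoodBdef]
      exact_mod_cast this
    have c3 : ((Bad1 ∪ SmallT ∪ {s''}).card : ℝ) ≤ (Bad1.card : ℝ) + SmallT.card + 1 := by
      have u1 : (Bad1 ∪ SmallT ∪ {s''}).card ≤ (Bad1 ∪ SmallT).card + 1 := by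
        have := Finset.card_union_le (Bad1 ∪ SmallT) ({s''} : Finset (Msg k))
        simpa using this
      have u2 : (Bad1 ∪ SmallT).card ≤ Bad1.card + SmallT.card := Finset.card_union_le _ _
      have : (Bad1 ∪ SmallT ∪ {s''}).card ≤ Bad1.card + SmallT.card + 1 := by omega
      exact_mod_cast this
    have hAR : (A.card : ℝ) ≤ (ℓ:ℝ) := by exact_mod_cast hA
    have h2t : (2:ℝ) ^ t = 2 * 2 ^ (t-1) := by
      rw [← pow_succ']
      congr 1
      omega
    have key : (2:ℝ)^q * 2^(t-1) + (8 * ℓ * 2^q + 8*ℓ + 1 + ℓ) ≤ 2^q * 2^t := by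
      rw [h2t]
      nlinarith [hpow32, h2q1, hℓR, mul_le_mul_of_nonneg_left hpow32 (le_trans zero_le_one h2q1)]
    rw [hcard_univ] at c2
    linarith
  -- Wof and its properties
  set Wof : Finset (Msg k) → Finset (Word n) :=
    fun A => Tset.filter (fun y => ∀ s ∈ A, y ∈ suppPre Cs m s) with hWof
  have hWinsert : ∀ (A : Finset (Msg k)) (s : Msg k),
      Wof (insert s A) = (Wof A).filter (fun y => y ∈ suppPre Cs m s) := by
    intro A s
    ext y
    simp only [hWof, Finset.mem_filter, Finset.mem_insert]
    constructor
    · rintro ⟨hT, h⟩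
      exact ⟨⟨hT, fun i hi => h i (Or.inr hi)⟩, h s (Or.inl rfl)⟩
    · rintro ⟨⟨hT, h⟩, hs⟩
      refine ⟨hT, fun i hi => ?_⟩
      rcases hi with rfl | hi
      · exact hs
      · exact h i hi
  have hsupp_sub : ∀ s : Msg k, suppPre Cs m s ⊆ Tset := by
    intro s y hy
    simp only [suppPre, Finset.mem_filter] at hy
    simp only [hTset, Finset.mem_filter]
    exact ⟨hy.1, hy.2.1⟩
  -- ==================== greedy selection ====================
  have hgreedy : ∀ j : ℕ, 1 ≤ j → j ≤ ℓ → ∃ A : Finset (Msg k), A ⊆ GoodB ∧ A.card = j ∧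
      ((Wof A).card : ℝ) * ((2:ℝ) ^ (t-1)) ^ (j-1) ≤ 2 ^ m := by
    intro j hj1 hjℓ
    induction j with
    | zero => omega
    | succ j ih =>
      by_cases hj0 : j = 0
      · subst hj0
        -- base case
        have hpool := hPool ∅ (by simpa using hℓ1)
        have hpos : (0:ℝ) < ((GoodB \ ∅).card : ℝ) := by
          have h1 : (0:ℝ) < (2:ℝ)^q * 2^(t-1) := by positivity
          linarith
        have hnonempty : (GoodB \ ∅).Nonempty := by
          rw [← Finset.card_pos]
          exact_mod_cast hpos
        obtain ⟨s₁, hs₁⟩ := hnonempty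
        rw [Finset.sdiff_empty] at hs₁
        refine ⟨{s₁}, by simp only [Finset.singleton_subset_iff]; exact hs₁, by simp, ?_⟩
        norm_num
        have : (Wof {s₁}).card ≤ Tset.card := Finset.card_le_card (Finset.filter_subset _ _)
        have hT : Tset.card ≤ 2 ^ m := card_pre_patterns m
        have : ((Wof {s₁}).card : ℝ) ≤ (2:ℝ)^m := by
          calc ((Wof {s₁}).card:ℝ) ≤ (Tset.card : ℝ) := by exact_mod_cast this
            _ ≤ (2:ℝ)^m := by exact_mod_cast hT
        exact this
      · -- inductive step
        have hj1' : 1 ≤ j := by omega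
        obtain ⟨A, hAsub, hAcard, hAbound⟩ := ih hj1' (by omega)
        set Pool : Finset (Msg k) := GoodB \ A with hPooldef
        have hpoolcard := hPool A (by omega)
        have hpoolpos : (0:ℝ) < (Pool.card : ℝ) := by
          have h1 : (0:ℝ) < (2:ℝ)^q * 2^(t-1) := by positivity
          rw [hPooldef]; linarith
        have hpoolne : Pool.Nonempty := by
          rw [← Finset.card_pos]; exact_mod_cast hpoolpos
        -- the key counting bound (in ℕ)
        have hsum : ∑ s ∈ Pool, ((Wof A).filter (fun y => y ∈ suppPre Cs m s)).card
            ≤ (Wof A).card * 2 ^ q := by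
          have step1 : ∀ s ∈ Pool, ((Wof A).filter (fun y => y ∈ suppPre Cs m s)).card
              = ∑ y ∈ Wof A, if y ∈ suppPre Cs m s then 1 else 0 := by
            intro s _; rw [Finset.card_filter]
          rw [Finset.sum_congr rfl step1, Finset.sum_comm]
          have step2 : ∀ y ∈ Wof A, (∑ s ∈ Pool, if y ∈ suppPre Cs m s then 1 else 0) ≤ 2^q := by
            intro y _
            have e1 : (∑ s ∈ Pool, if y ∈ suppPre Cs m s then 1 else 0)
                = (Pool.filter (fun s => y ∈ suppPre Cs m s)).card := by
              rw [Finset.card_filter]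
            rw [e1]
            have e2 : Pool.filter (fun s => y ∈ suppPre Cs m s)
                ⊆ Pool.filter (fun s => 0 < muP Cs m s y) := by
              intro u hu
              simp only [Finset.mem_filter] at hu ⊢
              refine ⟨hu.1, ?_⟩
              have hu2 := hu.2
              simp only [suppPre, Finset.mem_filter] at hu2
              exact hu2.2.2
            calc (Pool.filter (fun s => y ∈ suppPre Cs m s)).card
                ≤ (Pool.filter (fun s => 0 < muP Cs m s y)).card := Finset.card_le_card e2
              _ ≤ 2 ^ (n - m) := card_heavy_le Cs m y Pool
              _ = 2 ^ q := by rw [hq]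
          calc ∑ y ∈ Wof A, ∑ s ∈ Pool, (if y ∈ suppPre Cs m s then 1 else 0)
              ≤ ∑ y ∈ Wof A, 2^q := Finset.sum_le_sum step2
            _ = (Wof A).card * 2^q := by rw [Finset.sum_const, smul_eq_mul]
        -- pick an element at most the average
        have hex : ∃ s ∈ Pool, ((Wof (insert s A)).card : ℝ) * (Pool.card : ℝ)
            ≤ ((Wof A).card : ℝ) * 2 ^ q := by
          by_contra hno
          push_neg at hno
          have hub : ∑ s ∈ Pool, ((Wof (insert s A)).card : ℝ)
              ≤ ((Wof A).card : ℝ) * 2 ^ q := by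
            have : ∑ s ∈ Pool, ((Wof (insert s A)).card : ℝ)
                = ((∑ s ∈ Pool, ((Wof A).filter (fun y => y ∈ suppPre Cs m s)).card : ℕ) : ℝ) := by
              push_cast
              apply Finset.sum_congr rfl
              intro s _
              rw [hWinsert A s]
            rw [this]
            calc ((∑ s ∈ Pool, ((Wof A).filter (fun y => y ∈ suppPre Cs m s)).card : ℕ) : ℝ)
                ≤ (((Wof A).card * 2 ^ q : ℕ) : ℝ) := by exact_mod_cast hsum
              _ = ((Wof A).card : ℝ) * 2 ^ q := by push_cast; ring
          have hlb : ((Wof A).card : ℝ) * 2 ^ q < ∑ s ∈ Pool, ((Wof (insert s A)).card : ℝ) := by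
            have := Finset.sum_lt_sum_of_nonempty hpoolne
              (f := fun _ => ((Wof A).card : ℝ) * 2 ^ q / (Pool.card : ℝ))
              (g := fun s => ((Wof (insert s A)).card : ℝ)) ?_
            · have heq : ∑ _s ∈ Pool, ((Wof A).card : ℝ) * 2 ^ q / (Pool.card : ℝ)
                  = ((Wof A).card : ℝ) * 2 ^ q := by
                rw [Finset.sum_const, nsmul_eq_mul]
                rw [mul_comm]; exact div_mul_cancel₀ _ (ne_of_gt hpoolpos)
              rw [heq] at this
              exact this
            · intro s hs
              have h := hno s hs
              rw [div_lt_iff₀ hpoolpos]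
              calc ((Wof A).card : ℝ) * 2 ^ q < ((Wof (insert s A)).card : ℝ) * (Pool.card : ℝ) := h
                _ = ((Wof (insert s A)).card : ℝ) * (Pool.card : ℝ) := rfl
          linarith
        obtain ⟨s, hsPool, havg⟩ := hex
        have hsGood : s ∈ GoodB := (Finset.mem_sdiff.mp hsPool).1
        have hsA : s ∉ A := (Finset.mem_sdiff.mp hsPool).2
        refine ⟨insert s A, ?_, ?_, ?_⟩
        · intro x hx
          rcases Finset.mem_insert.mp hx with rfl | hx
          · exact hsGood
          · exact hAsub hx
        · rw [Finset.card_insert_of_notMem hsA, hAcard]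
        · -- bound
          have hWins : ((Wof (insert s A)).card : ℝ)
              ≤ ((Wof A).card : ℝ) / 2 ^ (t-1) := by
            have hpc : ((Wof (insert s A)).card : ℝ)
                ≤ ((Wof A).card : ℝ) * 2 ^ q / (Pool.card : ℝ) := by
              rw [le_div_iff₀ hpoolpos]
              exact havg
            have hpc2 : ((Wof A).card : ℝ) * 2 ^ q / (Pool.card : ℝ)
                ≤ ((Wof A).card : ℝ) / 2 ^ (t-1) := by
              rw [div_le_div_iff₀ hpoolpos (by positivity)]
              have : ((Wof A).card : ℝ) * ((2:ℝ)^q * 2^(t-1)) ≤ ((Wof A).card : ℝ) * (Pool.card : ℝ) := by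
                apply mul_le_mul_of_nonneg_left _ (Nat.cast_nonneg _)
                rw [hPooldef]
                exact hpoolcard
              calc ((Wof A).card : ℝ) * 2 ^ q * 2^(t-1)
                  = ((Wof A).card : ℝ) * ((2:ℝ)^q * 2^(t-1)) := by ring
                _ ≤ ((Wof A).card : ℝ) * (Pool.card : ℝ) := this
                _ = ((Wof A).card : ℝ) * (Pool.card : ℝ) := rfl
            linarith
          have hjj : j + 1 - 1 = (j - 1) + 1 := by omega
          rw [hjj, pow_succ]
          have h2t1pos : (0:ℝ) < 2^(t-1) := by positivity
          calc ((Wof (insert s A)).card : ℝ) * (((2:ℝ)^(t-1))^(j-1) * 2^(t-1))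
              ≤ (((Wof A).card : ℝ) / 2^(t-1)) * (((2:ℝ)^(t-1))^(j-1) * 2^(t-1)) := by
                apply mul_le_mul_of_nonneg_right hWins (by positivity)
            _ = ((Wof A).card : ℝ) / 2^(t-1) * 2^(t-1) * ((2:ℝ)^(t-1))^(j-1) := by ring
            _ = ((Wof A).card : ℝ) * ((2:ℝ)^(t-1))^(j-1) := by
                rw [div_mul_cancel₀ _ (ne_of_gt h2t1pos)]
            _ ≤ 2 ^ m := hAbound
  -- ==================== final contradiction ====================
  obtain ⟨A, hAG, hAcard, hAbound⟩ := hgreedy ℓ hℓ1 le_rfl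
  -- W is empty
  have hWempty : Wof A = ∅ := by
    by_contra hne
    have hpos : 1 ≤ (Wof A).card := by
      rw [Nat.one_le_iff_ne_zero]
      intro h0
      exact hne (Finset.card_eq_zero.mp h0)
    have hposR : (1:ℝ) ≤ ((Wof A).card : ℝ) := by exact_mod_cast hpos
    have hlow : ((2:ℝ)^(t-1))^(ℓ-1) ≤ ((Wof A).card : ℝ) * ((2:ℝ)^(t-1))^(ℓ-1) := by
      nlinarith [pow_pos (pow_pos (two_pos (α := ℝ)) (t-1)) (ℓ-1)]
    have hgt : (2:ℝ)^m < ((2:ℝ)^(t-1))^(ℓ-1) := by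
      rw [← pow_mul]
      have : (2:ℝ)^m < (2:ℝ)^(m+1) := by
        apply pow_lt_pow_right₀ (by norm_num) (by omega)
      calc (2:ℝ)^m < (2:ℝ)^(m+1) := this
        _ ≤ (2:ℝ)^((t-1)*(ℓ-1)) := by
            apply pow_le_pow_right₀ (by norm_num) ht2
    linarith
  -- witness s*
  have hwit := hPool A (le_of_eq hAcard)
  have hwitpos : (0:ℝ) < ((GoodB \ A).card : ℝ) := by
    have : (0:ℝ) < (2:ℝ)^q * 2^(t-1) := by positivity
    linarith
  have hwitne : (GoodB \ A).Nonempty := by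
    rw [← Finset.card_pos]; exact_mod_cast hwitpos
  obtain ⟨sw, hsw⟩ := hwitne
  have hswGood : sw ∈ GoodB := (Finset.mem_sdiff.mp hsw).1
  have hswBad1 : sw ∉ Bad1 := by
    have := (Finset.mem_sdiff.mp hswGood).2
    intro hmem
    exact this (Finset.mem_union_left _ (Finset.mem_union_left _ hmem))
  have hswSelf : crD Cs m sw sw ≤ β := by
    by_contra hgt
    push_neg at hgt
    exact hswBad1 (by simp only [hBad1def, Finset.mem_filter]; exact ⟨Finset.mem_univ _, hgt⟩)
  -- per-test lower bound on gVal
  have hδn1 : 1 ≤ ⌊δ * (n:ℝ)⌋₊ := hm1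
  have hkey : ∀ i ∈ A, 1 - 6*ε - 2*β ≤ gVal Cs m (suppPre Cs m i) sw := by
    intro i hiA
    have hiGood : i ∈ GoodB := hAG hiA
    have hiBadUnion := (Finset.mem_sdiff.mp hiGood).2
    have hiSmallT : i ∉ SmallT := fun hmem =>
      hiBadUnion (Finset.mem_union_left _ (Finset.mem_union_right _ hmem))
    have hins'' : i ≠ s'' := by
      intro h
      exact hiBadUnion (Finset.mem_union_right _ (by simp [h]))
    have hiCross : crD Cs m s'' i ≤ β := by
      by_contra hgt
      push_neg at hgt
      exact hiSmallT (by simp only [hSmallTdef, Finset.mem_filter]; exact ⟨Finset.mem_univ _, hgt⟩)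
    set V : Finset (Word n) := suppPre Cs m i with hV
    have hmem : fT m V ∈ LocalFam n δ := fT_mem_localFam hδn1 V
    obtain ⟨D, hD, hstat⟩ := hNM (fT m V) hmem
    have hpt : ∀ (s : Msg k) (o : Option (Msg k)),
        |decDist Cs (fT m V) s o - copyDist D s o| ≤ 2 * ε := by
      intro s o
      calc |decDist Cs (fT m V) s o - copyDist D s o|
          ≤ 2 * statDist (decDist Cs (fT m V) s) (copyDist D s) :=
            abs_le_two_statDist _ _ o
        _ ≤ 2 * ε := by linarith [hstat s]
    -- A1 : D none + D (some (some i)) ≥ 1 - 2ε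
    have hA1 : 1 - 2*ε ≤ D none + D (some (some i)) := by
      have hge : 1 ≤ decDist Cs (fT m V) i (some i) := by
        have := decDist_self_ge Cs m V i
        rw [hV] at this ⊢
        calc (1:ℝ) = gVal Cs m (suppPre Cs m i) i := (gVal_suppPre Cs m i).symm
          _ ≤ _ := this
      have hcopy : copyDist D i (some i) = D none + D (some (some i)) := by
        rw [copyDist_some, if_pos rfl]
      have habs := hpt i (some i)
      rw [hcopy] at habs
      have := abs_le.mp habs
      linarith [this.1]
    -- A2 : D (some (some i)) ≤ β + 2ε
    have hA2 : D (some (some i)) ≤ β + 2*ε := by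
      have hdec : decDist Cs (fT m V) s'' (some i) ≤ crD Cs m s'' i :=
        decDist_cross_le Cs m V s'' i hins''
      have hcopy : copyDist D s'' (some i) = D (some (some i)) := by
        rw [copyDist_some, if_neg hins'', zero_add]
      have habs := hpt s'' (some i)
      rw [hcopy] at habs
      have := abs_le.mp habs
      linarith [this.2, hiCross]
    -- A4 : decDist sw (some sw) ≥ 1 - 6ε - β
    have hA4 : 1 - 6*ε - β ≤ decDist Cs (fT m V) sw (some sw) := by
      have hcopy : copyDist D sw (some sw) = D none + D (some (some sw)) := by
        rw [copyDist_some, if_pos rfl]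
      have habs := hpt sw (some sw)
      rw [hcopy] at habs
      have := abs_le.mp habs
      have hDsw := hD.1 (some (some sw))
      linarith [this.1]
    -- A5
    have hA5 : decDist Cs (fT m V) sw (some sw) ≤ gVal Cs m V sw + β := by
      have := decDist_self_le Cs m V sw
      linarith [hswSelf]
    rw [hV] at hA5
    linarith
  -- union bound gives the contradiction
  have htotal : (1:ℝ) = ∑ y ∈ Tset, muP Cs m sw y := (muP_total Cs m sw).symm
  have hsubset : Tset ⊆ A.biUnion (fun i => Tset \ suppPre Cs m i) := by
    intro y hy
    rw [Finset.mem_biUnion]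
    have hyW : y ∉ Wof A := by rw [hWempty]; exact Finset.notMem_empty y
    simp only [hWof, Finset.mem_filter, not_and] at hyW
    have := hyW hy
    push_neg at this
    obtain ⟨i, hiA, hyi⟩ := this
    exact ⟨i, hiA, Finset.mem_sdiff.mpr ⟨hy, hyi⟩⟩
  have hle1 : ∑ y ∈ Tset, muP Cs m sw y
      ≤ ∑ i ∈ A, ∑ y ∈ Tset \ suppPre Cs m i, muP Cs m sw y := by
    calc ∑ y ∈ Tset, muP Cs m sw y
        ≤ ∑ y ∈ A.biUnion (fun i => Tset \ suppPre Cs m i), muP Cs m sw y :=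
          Finset.sum_le_sum_of_subset_of_nonneg hsubset (fun y _ _ => muP_nonneg Cs m sw y)
      _ ≤ ∑ i ∈ A, ∑ y ∈ Tset \ suppPre Cs m i, muP Cs m sw y :=
          nmc_sum_biUnion_le A _ _ (fun y => muP_nonneg Cs m sw y)
  have hper : ∀ i ∈ A, ∑ y ∈ Tset \ suppPre Cs m i, muP Cs m sw y ≤ 6*ε + 2*β := by
    intro i hiA
    have hsd := Finset.sum_sdiff (f := fun y => muP Cs m sw y) (hsupp_sub i)
    have hgv : gVal Cs m (suppPre Cs m i) sw = ∑ y ∈ suppPre Cs m i, muP Cs m sw y :=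
      gVal_eq_sum Cs m (by rw [← hTset]; exact hsupp_sub i) sw
    have hkey' := hkey i hiA
    rw [hgv] at hkey'
    have : ∑ y ∈ Tset \ suppPre Cs m i, muP Cs m sw y
        = (∑ y ∈ Tset, muP Cs m sw y) - ∑ y ∈ suppPre Cs m i, muP Cs m sw y := by
      linarith [hsd]
    rw [this, ← htotal]
    linarith
  have hfinal : (1:ℝ) ≤ (ℓ:ℝ) * (6*ε + 2*β) := by
    calc (1:ℝ) = ∑ y ∈ Tset, muP Cs m sw y := htotal
      _ ≤ ∑ i ∈ A, ∑ y ∈ Tset \ suppPre Cs m i, muP Cs m sw y := hle1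
      _ ≤ ∑ i ∈ A, (6*ε + 2*β) := Finset.sum_le_sum hper
      _ = (A.card : ℝ) * (6*ε + 2*β) := by rw [Finset.sum_const, nsmul_eq_mul]
      _ = (ℓ:ℝ) * (6*ε + 2*β) := by rw [hAcard]
  -- numeric contradiction
  have hεℓ : ε ≤ 1/(24*ℓ) := hεub
  have hβℓ : β = 1/(8*ℓ) := hβ
  have : (ℓ:ℝ) * (6*ε + 2*β) ≤ 1/2 := by
    have e6 : (6:ℝ)/(24*(ℓ:ℝ)) = 6*(1/(24*(ℓ:ℝ))) := by ring
    have h1 : 6*ε ≤ 6/(24*(ℓ:ℝ)) := by rw [e6]; linarith [hεℓ]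
    have h2 : (ℓ:ℝ) * (6*ε + 2*β) ≤ (ℓ:ℝ) * (6/(24*ℓ) + 2/(8*ℓ)) := by
      apply mul_le_mul_of_nonneg_left _ (le_of_lt hℓpos)
      rw [hβℓ]
      have : 2 * (1/(8*(ℓ:ℝ))) = 2/(8*ℓ) := by ring
      linarith [h1]
    have h3 : (ℓ:ℝ) * (6/(24*(ℓ:ℝ)) + 2/(8*(ℓ:ℝ))) = 1/2 := by
      field_simp
      ring
    linarith
  linarith
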